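/- Let K ⊂ R^p be a convex cone, E a p×p real matrix, and x̄ ∈ K a unit vector. Let T_K(x̄) = {t(v - x̄) : t ≥ 0, v ∈ K} be the tangent cone of K at x̄ and ‖E‖_{T_K(x̄)} its cone-restricted operator seminorm. For any unit vector v ∈ K, |v^T E v - x̄^T E x̄| ≤ 4 ‖v - x̄‖ ‖E‖_{T_K(x̄)}. -/

import Mathlib

open Matrix

/-- Euclidean norm of a vector in `Fin p → ℝ`. -/
noncomputable def enorm' {p : ℕ} (v : Fin p → ℝ) : ℝ := Real.sqrt (v ⬝ᵥ v)

/-- The cone-restricted operator seminorm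
`‖E‖_C = sup_{x,y ∈ C, ‖x‖=‖y‖=1} |xᵀ E y|`. -/
noncomputable def coneNorm {p : ℕ} (C : Set (Fin p → ℝ)) (E : Matrix (Fin p) (Fin p) ℝ) : ℝ :=
  sSup {r : ℝ | ∃ x ∈ C, ∃ y ∈ C, enorm' x = 1 ∧ enorm' y = 1 ∧ r = |x ⬝ᵥ E.mulVec y|}

/-- The tangent cone of `K` at `x̄`: `T_K(x̄) = {t (v - x̄) : t ≥ 0, v ∈ K}`. -/
def tangentCone {p : ℕ} (K : Set (Fin p → ℝ)) (xbar : Fin p → ℝ) : Set (Fin p → ℝ) :=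
  {w | ∃ t : ℝ, 0 ≤ t ∧ ∃ v ∈ K, w = t • (v - xbar)}

lemma dotSelf_nonneg {p : ℕ} (x : Fin p → ℝ) : 0 ≤ x ⬝ᵥ x :=
  Finset.sum_nonneg fun _ _ => mul_self_nonneg _

lemma enorm_nonneg' {p : ℕ} (x : Fin p → ℝ) : 0 ≤ enorm' x := Real.sqrt_nonneg _

lemma dotSelf_eq_one {p : ℕ} {x : Fin p → ℝ} (h : enorm' x = 1) : x ⬝ᵥ x = 1 := by
  have := Real.sq_sqrt (dotSelf_nonneg x)
  rw [show Real.sqrt (x ⬝ᵥ x) = enorm' x from rfl, h] at this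
  simpa using this.symm

lemma entry_abs_le_one {p : ℕ} {x : Fin p → ℝ} (h : enorm' x = 1) (i : Fin p) : |x i| ≤ 1 := by
  have h1 := dotSelf_eq_one h
  have h2 : x i * x i ≤ x ⬝ᵥ x :=
    Finset.single_le_sum (f := fun j => x j * x j) (fun j _ => mul_self_nonneg _)
      (Finset.mem_univ i)
  rw [h1] at h2
  exact abs_le_one_iff_mul_self_le_one.mpr h2

lemma enorm_smul' {p : ℕ} (c : ℝ) (x : Fin p → ℝ) : enorm' (c • x) = |c| * enorm' x := by
  unfold enorm'
  rw [smul_dotProduct, dotProduct_smul, smul_eq_mul, smul_eq_mul, ← mul_assoc,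
    Real.sqrt_mul (mul_self_nonneg c), Real.sqrt_mul_self_eq_abs]

lemma enorm_eq_zero_iff {p : ℕ} {x : Fin p → ℝ} : enorm' x = 0 ↔ x = 0 := by
  constructor
  · intro h
    have h0 : x ⬝ᵥ x = 0 := by
      have := (Real.sqrt_eq_zero (dotSelf_nonneg x)).mp h
      exact this
    funext i
    have := (Finset.sum_eq_zero_iff_of_nonneg
      (fun j (_ : j ∈ Finset.univ) => mul_self_nonneg (x j))).mp h0 i (Finset.mem_univ i)
    have := mul_self_eq_zero.mp this
    simpa using this
  · rintro rfl
    simp [enorm', dotProduct]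

lemma dot_bound {p : ℕ} (E : Matrix (Fin p) (Fin p) ℝ) {x y : Fin p → ℝ}
    (hx : enorm' x = 1) (hy : enorm' y = 1) :
    |x ⬝ᵥ E.mulVec y| ≤ ∑ i, ∑ j, |E i j| := by
  have : x ⬝ᵥ E.mulVec y = ∑ i, ∑ j, x i * (E i j * y j) := by
    simp [dotProduct, Matrix.mulVec, Finset.mul_sum]
  rw [this]
  calc |∑ i, ∑ j, x i * (E i j * y j)| ≤ ∑ i, ∑ j, |x i * (E i j * y j)| := by
        refine (Finset.abs_sum_le_sum_abs _ _).trans ?_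
        exact Finset.sum_le_sum fun i _ => Finset.abs_sum_le_sum_abs _ _
    _ ≤ ∑ i, ∑ j, |E i j| := by
        refine Finset.sum_le_sum fun i _ => Finset.sum_le_sum fun j _ => ?_
        rw [abs_mul, abs_mul]
        calc |x i| * (|E i j| * |y j|) ≤ 1 * (|E i j| * 1) := by
              apply mul_le_mul (entry_abs_le_one hx i) ?_ (by positivity) zero_le_one
              exact mul_le_mul_of_nonneg_left (entry_abs_le_one hy j) (abs_nonneg _)
          _ = |E i j| := by ring

lemma coneNorm_bddAbove {p : ℕ} (C : Set (Fin p → ℝ)) (E : Matrix (Fin p) (Fin p) ℝ) :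
    BddAbove {r : ℝ | ∃ x ∈ C, ∃ y ∈ C, enorm' x = 1 ∧ enorm' y = 1 ∧ r = |x ⬝ᵥ E.mulVec y|} := by
  refine ⟨∑ i, ∑ j, |E i j|, ?_⟩
  rintro r ⟨x, -, y, -, hx, hy, rfl⟩
  exact dot_bound E hx hy

lemma le_coneNorm {p : ℕ} {C : Set (Fin p → ℝ)} (E : Matrix (Fin p) (Fin p) ℝ)
    {x y : Fin p → ℝ} (hxC : x ∈ C) (hyC : y ∈ C) (hx : enorm' x = 1) (hy : enorm' y = 1) :
    |x ⬝ᵥ E.mulVec y| ≤ coneNorm C E :=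
  le_csSup (coneNorm_bddAbove C E) ⟨x, hxC, y, hyC, hx, hy, rfl⟩

/-- For unit vectors `v, x̄` in a convex cone `K`,
`|vᵀ E v - x̄ᵀ E x̄| ≤ 4 ‖v - x̄‖ ‖E‖_{T_K(x̄)}`. -/
theorem abs_quadForm_sub_le_tangent {p : ℕ} (K : ConvexCone ℝ (Fin p → ℝ))
    (E : Matrix (Fin p) (Fin p) ℝ) (xbar v : Fin p → ℝ)
    (hxK : xbar ∈ K) (hx : enorm' xbar = 1) (hvK : v ∈ K) (hv : enorm' v = 1) :
    |v ⬝ᵥ E.mulVec v - xbar ⬝ᵥ E.mulVec xbar| ≤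
      4 * enorm' (v - xbar) * coneNorm (tangentCone (K : Set (Fin p → ℝ)) xbar) E := by
  set T := tangentCone (K : Set (Fin p → ℝ)) xbar with hT
  have hxT : xbar ∈ T := ⟨1, zero_le_one, xbar + xbar, K.add_mem hxK hxK, by
    rw [one_smul]; abel⟩
  have hvT : v ∈ T := ⟨1, zero_le_one, v + xbar, K.add_mem hvK hxK, by
    rw [one_smul]; abel⟩
  have hCnn : 0 ≤ coneNorm T E :=
    le_trans (abs_nonneg _) (le_coneNorm E hxT hxT hx hx)
  by_cases hvx : v = xbar
  · simp [hvx]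
    rw [enorm_eq_zero_iff.mpr rfl, mul_zero, zero_mul]
  set w := v - xbar with hw
  have hwne : w ≠ 0 := sub_ne_zero.mpr hvx
  set n := enorm' w with hn
  have hnpos : 0 < n := by
    rcases (enorm_nonneg' w).lt_or_eq with h | h
    · exact h
    · exact absurd (enorm_eq_zero_iff.mp h.symm) hwne
  set u := n⁻¹ • w with hu
  have hun : enorm' u = 1 := by
    rw [hu, enorm_smul', abs_of_nonneg (inv_nonneg.mpr hnpos.le), ← hn,
      inv_mul_cancel₀ hnpos.ne']
  have huT : u ∈ T := ⟨n⁻¹, inv_nonneg.mpr hnpos.le, v, hvK, by rw [hu, hw]⟩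
  have hwu : w = n • u := by
    rw [hu, smul_smul, mul_inv_cancel₀ hnpos.ne', one_smul]
  have hdecomp : v ⬝ᵥ E.mulVec v - xbar ⬝ᵥ E.mulVec xbar
      = w ⬝ᵥ E.mulVec v + xbar ⬝ᵥ E.mulVec w := by
    rw [hw, sub_dotProduct, mulVec_sub, dotProduct_sub]
    ring
  have h1 : w ⬝ᵥ E.mulVec v = n * (u ⬝ᵥ E.mulVec v) := by
    rw [hwu, smul_dotProduct, smul_eq_mul]
  have h2 : xbar ⬝ᵥ E.mulVec w = n * (xbar ⬝ᵥ E.mulVec u) := by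
    rw [hwu, mulVec_smul, dotProduct_smul, smul_eq_mul]
  calc |v ⬝ᵥ E.mulVec v - xbar ⬝ᵥ E.mulVec xbar|
      ≤ |w ⬝ᵥ E.mulVec v| + |xbar ⬝ᵥ E.mulVec w| := by
        rw [hdecomp]; exact abs_add_le _ _
    _ = n * |u ⬝ᵥ E.mulVec v| + n * |xbar ⬝ᵥ E.mulVec u| := by
        rw [h1, h2, abs_mul, abs_mul, abs_of_pos hnpos]
    _ ≤ n * coneNorm T E + n * coneNorm T E := by
        gcongr
        · exact le_coneNorm E huT hvT hun hv
        · exact le_coneNorm E hxT huT hx hun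
    _ ≤ 4 * n * coneNorm T E := by nlinarith
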